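/- For all real numbers x₁, x₂, y₁, y₂ ≥ 0 and all β ≥ 1, the β-distance is subadditive: dist^β(x₁ + x₂, y₁ + y₂) ≤ dist^β(x₁, y₁) + dist^β(x₂, y₂). -/

import Mathlib

/-- The `β`-distance: `dist^β(x,y) = min_{α ∈ [1/β, β]} |α·x − y|`. -/
noncomputable def distB (β x y : ℝ) : ℝ :=
  sInf ((fun α => |α * x - y|) '' Set.Icc (1 / β) β)

lemma distB_exists_min (β x y : ℝ) (hβ : 1 ≤ β) :
    ∃ α ∈ Set.Icc (1 / β) β, distB β x y = |α * x - y| := by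
  have hβ0 : 0 < β := lt_of_lt_of_le one_pos hβ
  have hne : (Set.Icc (1 / β) β).Nonempty :=
    ⟨1, by constructor <;> [exact div_le_one_of_le₀ hβ hβ0.le; exact hβ]⟩
  have hc : IsCompact (Set.Icc (1 / β) β) := isCompact_Icc
  have hcont : ContinuousOn (fun α => |α * x - y|) (Set.Icc (1 / β) β) := by
    fun_prop
  obtain ⟨α, hα, h⟩ := hc.exists_sInf_image_eq hne hcont
  exact ⟨α, hα, h⟩

lemma distB_le (β x y α : ℝ) (hα : α ∈ Set.Icc (1 / β) β) :
    distB β x y ≤ |α * x - y| := by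
  apply csInf_le
  · exact ⟨0, by rintro _ ⟨a, _, rfl⟩; positivity⟩
  · exact ⟨α, hα, rfl⟩

/-- Subadditivity of the `β`-distance:
`dist^β(x₁ + x₂, y₁ + y₂) ≤ dist^β(x₁, y₁) + dist^β(x₂, y₂)`. -/
theorem stmt_14 (x₁ x₂ y₁ y₂ β : ℝ) (hx₁ : 0 ≤ x₁) (hx₂ : 0 ≤ x₂)
    (hy₁ : 0 ≤ y₁) (hy₂ : 0 ≤ y₂) (hβ : 1 ≤ β) :
    distB β (x₁ + x₂) (y₁ + y₂) ≤ distB β x₁ y₁ + distB β x₂ y₂ := by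
  obtain ⟨α₁, hα₁, h₁⟩ := distB_exists_min β x₁ y₁ hβ
  obtain ⟨α₂, hα₂, h₂⟩ := distB_exists_min β x₂ y₂ hβ
  rw [h₁, h₂]
  rcases eq_or_lt_of_le (by positivity : (0:ℝ) ≤ x₁ + x₂) with hx | hx
  · have hx1 : x₁ = 0 := by linarith [abs_nonneg x₂, hx₂]
    have hx2 : x₂ = 0 := by linarith
    calc distB β (x₁ + x₂) (y₁ + y₂) ≤ |1 * (x₁ + x₂) - (y₁ + y₂)| :=
          distB_le _ _ _ 1 ⟨div_le_one_of_le₀ hβ (by linarith), hβ⟩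
      _ ≤ |α₁ * x₁ - y₁| + |α₂ * x₂ - y₂| := by
          subst hx1 hx2
          simp only [mul_zero, zero_sub, abs_neg, abs_of_nonneg hy₁, abs_of_nonneg hy₂]
          rw [one_mul, zero_add, zero_sub, abs_neg, abs_of_nonneg (by linarith)]
  · set α := (α₁ * x₁ + α₂ * x₂) / (x₁ + x₂) with hαdef
    have hαIcc : α ∈ Set.Icc (1 / β) β := by
      constructor
      · rw [le_div_iff₀ hx]
        have := hα₁.1; have := hα₂.1
        nlinarith [this, hα₁.1]
      · rw [div_le_iff₀ hx]
        nlinarith [hα₁.2, hα₂.2]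
    have hmul : α * (x₁ + x₂) = α₁ * x₁ + α₂ * x₂ := by
      rw [hαdef, div_mul_cancel₀ _ hx.ne']
    calc distB β (x₁ + x₂) (y₁ + y₂) ≤ |α * (x₁ + x₂) - (y₁ + y₂)| := distB_le _ _ _ α hαIcc
      _ = |(α₁ * x₁ - y₁) + (α₂ * x₂ - y₂)| := by rw [hmul]; ring_nf
      _ ≤ |α₁ * x₁ - y₁| + |α₂ * x₂ - y₂| := abs_add_le _ _
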